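/- Under the hypotheses of the previous statement, the conjugacy Θ = π_g ∘ π_f^{−1} : Λ → [0,1] coincides with the distribution function of the measure μ := μ_{φ_g} ∘ π_f^{−1}, i.e. Θ(x) = μ((−∞, x]) for all x ∈ Λ, where μ_{φ_g} is the Gibbs measure of the geometric potential φ_g := −log g' ∘ π_g and λ = μ_{φ_g} ∘ π_g^{−1} is Lebesgue measure on [0,1]. -/

import Mathlib

open Filter MeasureTheory Set Metric Topology

noncomputable section

def shift {I : Type*} (ω : ℕ → I) : ℕ → I := fun n => ω (n + 1)

def birk {I : Type*} (f : (ℕ → I) → ℝ) (n : ℕ) (ω : ℕ → I) : ℝ :=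
  ∑ k ∈ Finset.range n, f (shift^[k] ω)

def cylN {I : Type*} (ω : ℕ → I) (n : ℕ) : Set (ℕ → I) := {ω' | ∀ k < n, ω' k = ω k}

/-- A full expanding C^{1+ε} branch on J: the branch maps J onto [0,1], is
differentiable with derivative > 1, and the derivative is Hölder continuous. -/
def FullBranchExpanding (g : ℝ → ℝ) (J : Set ℝ) : Prop :=
  g '' J = Set.Icc 0 1 ∧ DifferentiableOn ℝ g J ∧
    (∀ x ∈ J, 1 < derivWithin g J x) ∧
    ∃ ε C : ℝ, 0 < ε ∧ 0 < C ∧ ∀ x ∈ J, ∀ y ∈ J,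
      |derivWithin g J x - derivWithin g J y| ≤ C * |x - y| ^ ε

/-- An expanding piecewise C^{1+ε} interval map with s full branches on
J_i = [u i, v i] ⊆ [0,1] (in increasing order), together with its coding map π. -/
structure ExpandingSystem (s : ℕ) where
  u : Fin s → ℝ
  v : Fin s → ℝ
  huv : ∀ i, u i < v i
  hsub : ∀ i, Set.Icc (u i) (v i) ⊆ Set.Icc (0 : ℝ) 1
  horder : ∀ i j : Fin s, i < j → v i ≤ u j
  br : Fin s → ℝ → ℝ
  hbr : ∀ i, FullBranchExpanding (br i) (Set.Icc (u i) (v i))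
  π : (ℕ → Fin s) → ℝ
  hπmem : ∀ ω : ℕ → Fin s, π ω ∈ Set.Icc (u (ω 0)) (v (ω 0))
  hπconj : ∀ ω : ℕ → Fin s, br (ω 0) (π ω) = π (shift ω)

/-- The geometric potential φ_g = −log g' ∘ π_g of an expanding system. -/
def expGeomPot {s : ℕ} (G : ExpandingSystem s) : (ℕ → Fin s) → ℝ :=
  fun ω => -Real.log (derivWithin (G.br (ω 0)) (Set.Icc (G.u (ω 0)) (G.v (ω 0))) (G.π ω))

/-- Gibbs measure in the sense of Bowen for a potential with zero pressure:
a shift-invariant probability measure whose cylinder measures are comparable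
to exp(S_nψ). -/
def IsGibbsZero {I : Type*} [MeasurableSpace I] (μ : Measure (ℕ → I))
    (ψ : (ℕ → I) → ℝ) : Prop :=
  μ Set.univ = 1 ∧ (∀ A : Set (ℕ → I), μ (shift ⁻¹' A) = μ A) ∧
    ∃ C : ℝ, 1 ≤ C ∧ ∀ (ω : ℕ → I) (n : ℕ),
      ENNReal.ofReal (C⁻¹ * Real.exp (birk ψ n ω)) ≤ μ (cylN ω n) ∧
      μ (cylN ω n) ≤ ENNReal.ofReal (C * Real.exp (birk ψ n ω))

namespace Helpers

variable {s : ℕ}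

lemma shift_iterate_apply {I : Type*} (ω : ℕ → I) (m n : ℕ) :
    (shift^[m] ω) n = ω (n + m) := by
  induction m generalizing ω n with
  | zero => rfl
  | succ m ih =>
    rw [Function.iterate_succ_apply, ih]
    show ω (n + m + 1) = ω (n + (m + 1))
    congr 1

lemma conj_iter (E : ExpandingSystem s) (ω : ℕ → Fin s) (m : ℕ) :
    E.br (ω m) (E.π (shift^[m] ω)) = E.π (shift^[m + 1] ω) := by
  have h := E.hπconj (shift^[m] ω)
  rw [shift_iterate_apply ω m 0, Nat.zero_add] at h
  rw [h, ← Function.iterate_succ_apply' shift m ω]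

lemma br_strictMono (E : ExpandingSystem s) (i : Fin s) :
    StrictMonoOn (E.br i) (Icc (E.u i) (E.v i)) := by
  obtain ⟨himg, hdiff, hderiv, _⟩ := E.hbr i
  apply strictMonoOn_of_deriv_pos (convex_Icc _ _) hdiff.continuousOn
  intro x hx
  rw [interior_Icc] at hx
  have hmem : x ∈ Icc (E.u i) (E.v i) := Ioo_subset_Icc_self hx
  have h1 := hderiv x hmem
  rw [derivWithin_of_mem_nhds (Icc_mem_nhds hx.1 hx.2)] at h1
  linarith

lemma br_left (E : ExpandingSystem s) (i : Fin s) : E.br i (E.u i) = 0 := by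
  have himg := (E.hbr i).1
  have hmono := (br_strictMono E i).monotoneOn
  have hu : E.u i ∈ Icc (E.u i) (E.v i) := left_mem_Icc.mpr (E.huv i).le
  have h1 : E.br i (E.u i) ∈ Icc (0 : ℝ) 1 := himg ▸ mem_image_of_mem _ hu
  have h0 : (0 : ℝ) ∈ E.br i '' Icc (E.u i) (E.v i) := by
    rw [himg]; exact ⟨le_refl 0, zero_le_one⟩
  obtain ⟨t, ht, hft⟩ := h0
  have h2 : E.br i (E.u i) ≤ E.br i t := hmono hu ht ht.1
  linarith [h1.1, hft ▸ h2]

lemma br_right (E : ExpandingSystem s) (i : Fin s) : E.br i (E.v i) = 1 := by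
  have himg := (E.hbr i).1
  have hmono := (br_strictMono E i).monotoneOn
  have hv : E.v i ∈ Icc (E.u i) (E.v i) := right_mem_Icc.mpr (E.huv i).le
  have h1 : E.br i (E.v i) ∈ Icc (0 : ℝ) 1 := himg ▸ mem_image_of_mem _ hv
  have h0 : (1 : ℝ) ∈ E.br i '' Icc (E.u i) (E.v i) := by
    rw [himg]; exact ⟨zero_le_one, le_refl 1⟩
  obtain ⟨t, ht, hft⟩ := h0
  have h2 : E.br i t ≤ E.br i (E.v i) := hmono ht hv ht.2
  linarith [h1.2, hft ▸ h2]

lemma pi_le (E : ExpandingSystem s) :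
    ∀ (k : ℕ) (ω ω' : ℕ → Fin s), (∀ j < k, ω j = ω' j) → ω k < ω' k →
      E.π ω ≤ E.π ω' := by
  intro k
  induction k with
  | zero =>
    intro ω ω' _ hk
    calc E.π ω ≤ E.v (ω 0) := (E.hπmem ω).2
      _ ≤ E.u (ω' 0) := E.horder _ _ hk
      _ ≤ E.π ω' := (E.hπmem ω').1
  | succ k ih =>
    intro ω ω' hagree hk
    have h0 : ω 0 = ω' 0 := hagree 0 (Nat.succ_pos k)
    have hsh : E.π (shift ω) ≤ E.π (shift ω') := by
      apply ih
      · intro j hj; exact hagree (j + 1) (by omega)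
      · exact hk
    have hmem' : E.π ω' ∈ Icc (E.u (ω 0)) (E.v (ω 0)) := by
      rw [h0]; exact E.hπmem ω'
    have hb : E.br (ω 0) (E.π ω) ≤ E.br (ω 0) (E.π ω') := by
      rw [E.hπconj ω, h0, E.hπconj ω']
      exact hsh
    exact ((br_strictMono E (ω 0)).le_iff_le (E.hπmem ω) hmem').mp hb

lemma pi_shift_eq (E : ExpandingSystem s) :
    ∀ (k : ℕ) (ω ω' : ℕ → Fin s), (∀ j < k, ω j = ω' j) → E.π ω = E.π ω' →
      E.π (shift^[k] ω) = E.π (shift^[k] ω') := by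
  intro k
  induction k with
  | zero => intro ω ω' _ h; exact h
  | succ k ih =>
    intro ω ω' hagree h
    have hk := ih ω ω' (fun j hj => hagree j (by omega)) h
    have h1 := conj_iter E ω k
    have h2 := conj_iter E ω' k
    rw [← h1, ← h2, hagree k (by omega), hk]

lemma entry_zero (E : ExpandingSystem s) (ω ω' : ℕ → Fin s) (k : ℕ)
    (hagree : ∀ j < k, ω j = ω' j) (hππ : E.π ω = E.π ω') (hk : ω k < ω' k) :
    E.π (shift^[k + 1] ω') = 0 := by
  have hy : E.π (shift^[k] ω) = E.π (shift^[k] ω') := pi_shift_eq E k ω ω' hagree hππ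
  have h1 : E.π (shift^[k] ω') ∈ Icc (E.u (ω k)) (E.v (ω k)) := by
    rw [← hy]
    have := E.hπmem (shift^[k] ω)
    rwa [shift_iterate_apply ω k 0, Nat.zero_add] at this
  have h2 : E.π (shift^[k] ω') ∈ Icc (E.u (ω' k)) (E.v (ω' k)) := by
    have := E.hπmem (shift^[k] ω')
    rwa [shift_iterate_apply ω' k 0, Nat.zero_add] at this
  have hvu := E.horder _ _ hk
  have hyu : E.π (shift^[k] ω') = E.u (ω' k) :=
    le_antisymm (h1.2.trans hvu) h2.1
  rw [← conj_iter E ω' k, hyu, br_left]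

lemma entry_one (E : ExpandingSystem s) (ω ω' : ℕ → Fin s) (k : ℕ)
    (hagree : ∀ j < k, ω j = ω' j) (hππ : E.π ω = E.π ω') (hk : ω' k < ω k) :
    E.π (shift^[k + 1] ω') = 1 := by
  have hy : E.π (shift^[k] ω) = E.π (shift^[k] ω') := pi_shift_eq E k ω ω' hagree hππ
  have h1 : E.π (shift^[k] ω') ∈ Icc (E.u (ω k)) (E.v (ω k)) := by
    rw [← hy]
    have := E.hπmem (shift^[k] ω)
    rwa [shift_iterate_apply ω k 0, Nat.zero_add] at this
  have h2 : E.π (shift^[k] ω') ∈ Icc (E.u (ω' k)) (E.v (ω' k)) := by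
    have := E.hπmem (shift^[k] ω')
    rwa [shift_iterate_apply ω' k 0, Nat.zero_add] at this
  have hvu := E.horder _ _ hk
  have hyv : E.π (shift^[k] ω') = E.v (ω' k) :=
    le_antisymm h2.2 (hvu.trans h1.1)
  rw [← conj_iter E ω' k, hyv, br_right]

lemma u_nonneg (E : ExpandingSystem s) (i : Fin s) : 0 ≤ E.u i :=
  (E.hsub i (left_mem_Icc.mpr (E.huv i).le)).1

lemma v_le_one (E : ExpandingSystem s) (i : Fin s) : E.v i ≤ 1 :=
  (E.hsub i (right_mem_Icc.mpr (E.huv i).le)).2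

lemma pi_zero_step (E : ExpandingSystem s) (τ : ℕ → Fin s) (h : E.π τ = 0) :
    E.u (τ 0) = 0 ∧ E.π (shift τ) = 0 := by
  have hm := E.hπmem τ
  have hu : E.u (τ 0) = 0 := le_antisymm (h ▸ hm.1) (u_nonneg E (τ 0))
  refine ⟨hu, ?_⟩
  rw [← E.hπconj τ, h]
  have hb := br_left E (τ 0)
  rwa [hu] at hb

lemma pi_one_step (E : ExpandingSystem s) (τ : ℕ → Fin s) (h : E.π τ = 1) :
    E.v (τ 0) = 1 ∧ E.π (shift τ) = 1 := by
  have hm := E.hπmem τ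
  have hv : E.v (τ 0) = 1 := le_antisymm (v_le_one E (τ 0)) (h ▸ hm.2)
  refine ⟨hv, ?_⟩
  rw [← E.hπconj τ, h]
  have hb := br_right E (τ 0)
  rwa [hv] at hb

lemma tail_zero (E : ExpandingSystem s) (ω' : ℕ → Fin s) (m : ℕ)
    (h : E.π (shift^[m] ω') = 0) : ∀ d : ℕ, E.u (ω' (m + d)) = 0 := by
  have key : ∀ d : ℕ, E.π (shift^[m + d] ω') = 0 := by
    intro d
    induction d with
    | zero => exact h
    | succ d ih =>
      have := (pi_zero_step E (shift^[m + d] ω') ih).2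
      rwa [← Function.iterate_succ_apply' shift (m + d) ω'] at this
  intro d
  have h0 := (pi_zero_step E (shift^[m + d] ω') (key d)).1
  rwa [shift_iterate_apply ω' (m + d) 0, Nat.zero_add] at h0

lemma tail_one (E : ExpandingSystem s) (ω' : ℕ → Fin s) (m : ℕ)
    (h : E.π (shift^[m] ω') = 1) : ∀ d : ℕ, E.v (ω' (m + d)) = 1 := by
  have key : ∀ d : ℕ, E.π (shift^[m + d] ω') = 1 := by
    intro d
    induction d with
    | zero => exact h
    | succ d ih =>
      have := (pi_one_step E (shift^[m + d] ω') ih).2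
      rwa [← Function.iterate_succ_apply' shift (m + d) ω'] at this
  intro d
  have h0 := (pi_one_step E (shift^[m + d] ω') (key d)).1
  rwa [shift_iterate_apply ω' (m + d) 0, Nat.zero_add] at h0

lemma u_zero_unique (E : ExpandingSystem s) {i j : Fin s}
    (hi : E.u i = 0) (hj : E.u j = 0) : i = j := by
  rcases lt_trichotomy i j with h | h | h
  · exfalso; have h1 := E.horder i j h; have h2 := E.huv i; linarith
  · exact h
  · exfalso; have h1 := E.horder j i h; have h2 := E.huv j; linarith

lemma v_one_unique (E : ExpandingSystem s) {i j : Fin s}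
    (hi : E.v i = 1) (hj : E.v j = 1) : i = j := by
  rcases lt_trichotomy i j with h | h | h
  · exfalso; have h1 := E.horder i j h; have h2 := E.huv j
    have h3 := v_le_one E j; linarith
  · exact h
  · exfalso; have h1 := E.horder j i h; have h2 := E.huv i
    have h3 := v_le_one E i; linarith

lemma fiber_ext (E : ExpandingSystem s) (ω ω' ω'' : ℕ → Fin s) (k : ℕ)
    (h1 : ∀ j < k, ω' j = ω j) (h2 : ∀ j < k, ω'' j = ω j)
    (hk' : ω' k ≠ ω k) (hk'' : ω'' k = ω' k)
    (hp' : E.π ω' = E.π ω) (hp'' : E.π ω'' = E.π ω) : ω' = ω'' := by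
  funext j
  rcases lt_trichotomy j k with hj | hj | hj
  · rw [h1 j hj, h2 j hj]
  · rw [hj, hk'']
  · rcases hk'.lt_or_gt with hlt | hgt
    · -- ω' k < ω k : tails are all-one
      have e' := entry_one E ω ω' k (fun j hj => (h1 j hj).symm) hp'.symm hlt
      have e'' := entry_one E ω ω'' k (fun j hj => (h2 j hj).symm) hp''.symm
        (hk'' ▸ hlt)
      obtain ⟨d, rfl⟩ := Nat.exists_eq_add_of_le (Nat.succ_le_of_lt hj)
      exact v_one_unique E (tail_one E ω' (k + 1) e' d) (tail_one E ω'' (k + 1) e'' d)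
    · have e' := entry_zero E ω ω' k (fun j hj => (h1 j hj).symm) hp'.symm hgt
      have e'' := entry_zero E ω ω'' k (fun j hj => (h2 j hj).symm) hp''.symm
        (hk'' ▸ hgt)
      obtain ⟨d, rfl⟩ := Nat.exists_eq_add_of_le (Nat.succ_le_of_lt hj)
      exact u_zero_unique E (tail_zero E ω' (k + 1) e' d) (tail_zero E ω'' (k + 1) e'' d)


lemma fiber_countable (E : ExpandingSystem s) (x : ℝ) :
    {ω' : ℕ → Fin s | E.π ω' = x}.Countable := by
  classical
  rcases ({ω' : ℕ → Fin s | E.π ω' = x}).eq_empty_or_nonempty with h | ⟨ω, hω⟩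
  · rw [h]; exact countable_empty
  apply Set.countable_iff_exists_injOn.mpr
  refine ⟨fun ω' => if ω' = ω then 0 else
    Nat.pair (sInf {n | ω' n ≠ ω n}) (ω' (sInf {n | ω' n ≠ ω n})).val + 1, ?_⟩
  intro ω' hω' ω'' hω'' heq
  by_cases h1 : ω' = ω <;> by_cases h2 : ω'' = ω
  · rw [h1, h2]
  · simp only [if_pos h1, if_neg h2] at heq; omega
  · simp only [if_neg h1, if_pos h2] at heq; omega
  · simp only [if_neg h1, if_neg h2, Nat.add_right_cancel_iff] at heq
    obtain ⟨hk, hvals⟩ := Nat.pair_eq_pair.mp heq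
    have hne' : {n | ω' n ≠ ω n}.Nonempty := Function.ne_iff.mp h1
    have hne'' : {n | ω'' n ≠ ω n}.Nonempty := Function.ne_iff.mp h2
    have hkmem : ω' (sInf {n | ω' n ≠ ω n}) ≠ ω (sInf {n | ω' n ≠ ω n}) :=
      Nat.sInf_mem hne'
    have hmin' : ∀ j < sInf {n | ω' n ≠ ω n}, ω' j = ω j :=
      fun j hj => not_not.mp (Nat.notMem_of_lt_sInf hj)
    have hmin'' : ∀ j < sInf {n | ω' n ≠ ω n}, ω'' j = ω j := by
      intro j hj
      rw [hk] at hj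
      exact not_not.mp (Nat.notMem_of_lt_sInf hj)
    have hk'' : ω'' (sInf {n | ω' n ≠ ω n}) = ω' (sInf {n | ω' n ≠ ω n}) := by
      apply Fin.val_injective
      conv_lhs => rw [hk]
      exact hvals.symm
    exact (fiber_ext E ω ω' ω'' (sInf {n | ω' n ≠ ω n}) hmin' hmin'' hkmem hk''
      (hω'.trans hω.symm) (hω''.trans hω.symm)).symm ▸ rfl

end Helpers

open Helpers

/-- The conjugacy Θ = π_g ∘ π_f⁻¹ coincides with the distribution function of
μ = μ_{φ_g} ∘ π_f⁻¹, where μ_{φ_g} is the Gibbs measure of the geometric potential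
φ_g and μ_{φ_g} ∘ π_g⁻¹ is Lebesgue measure on [0,1]. -/
theorem conjugacy_eq_distribution_function (s : ℕ) (hs : 2 ≤ s)
    (F G : ExpandingSystem s) (hGrange : G.π '' Set.univ = Set.Icc (0 : ℝ) 1)
    (μg : Measure (ℕ → Fin s)) (hGibbs : IsGibbsZero μg (expGeomPot G))
    (hπg : Measurable G.π) (hπf : Measurable F.π)
    (hLeb : μg.map G.π = volume.restrict (Set.Icc (0 : ℝ) 1))
    (Θ : ℝ → ℝ) (hΘ : ∀ ω : ℕ → Fin s, Θ (F.π ω) = G.π ω) :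
    ∀ x ∈ F.π '' Set.univ, Θ x = ((μg.map F.π) (Set.Iic x)).toReal := by
  classical
  rintro x ⟨ω, -, rfl⟩
  have hc01 : G.π ω ∈ Icc (0 : ℝ) 1 := G.hsub (ω 0) (G.hπmem ω)
  -- preimages of singletons under G.π are null
  have hGnull : ∀ t : ℝ, μg (G.π ⁻¹' {t}) = 0 := by
    intro t
    have h1 : μg.map G.π {t} = μg (G.π ⁻¹' {t}) :=
      Measure.map_apply hπg (measurableSet_singleton t)
    rw [hLeb] at h1
    rw [← h1, Measure.restrict_apply (measurableSet_singleton t)]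
    refine le_antisymm (le_trans (measure_mono Set.inter_subset_left) ?_) (zero_le)
    rw [Real.volume_singleton]
  -- singletons are null
  have hωnull : ∀ τ : ℕ → Fin s, μg {τ} = 0 := by
    intro τ
    refine measure_mono_null ?_ (hGnull (G.π τ))
    intro z hz
    rw [Set.mem_singleton_iff] at hz
    rw [hz]
    exact rfl
  -- the fiber of F.π over x is countable, hence null
  have hFnull : μg (F.π ⁻¹' {F.π ω}) = 0 := by
    have hcnt : (F.π ⁻¹' {F.π ω}).Countable := by
      have he : F.π ⁻¹' {F.π ω} = {ω' | F.π ω' = F.π ω} := rfl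
      rw [he]
      exact fiber_countable F (F.π ω)
    rw [← Set.biUnion_of_singleton (F.π ⁻¹' {F.π ω})]
    exact (measure_biUnion_null_iff hcnt).mpr fun ω' _ => hωnull ω'
  have hN : μg (F.π ⁻¹' {F.π ω} ∪ G.π ⁻¹' {G.π ω}) = 0 := by
    refine le_antisymm (le_trans (measure_union_le _ _) ?_) (zero_le)
    rw [hFnull, hGnull]
    simp
  -- the two half-line preimages agree up to the null set N
  have hsub1 : F.π ⁻¹' Iic (F.π ω) ⊆
      G.π ⁻¹' Iic (G.π ω) ∪ (F.π ⁻¹' {F.π ω} ∪ G.π ⁻¹' {G.π ω}) := by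
    intro ω' hA'
    rw [Set.mem_preimage, Set.mem_Iic] at hA'
    by_cases hne : ω' = ω
    · exact Or.inl (by rw [Set.mem_preimage, Set.mem_Iic, hne])
    · have hne2 : {n | ω' n ≠ ω n}.Nonempty := Function.ne_iff.mp hne
      have hkmem : ω' (sInf {n | ω' n ≠ ω n}) ≠ ω (sInf {n | ω' n ≠ ω n}) :=
        Nat.sInf_mem hne2
      have hmin : ∀ j < sInf {n | ω' n ≠ ω n}, ω' j = ω j :=
        fun j hj => not_not.mp (Nat.notMem_of_lt_sInf hj)
      rcases hkmem.lt_or_gt with hlt | hgt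
      · exact Or.inl (pi_le G _ ω' ω hmin hlt)
      · refine Or.inr (Or.inl ?_)
        have := pi_le F _ ω ω' (fun j hj => (hmin j hj).symm) hgt
        exact le_antisymm hA' this
  have hsub2 : G.π ⁻¹' Iic (G.π ω) ⊆
      F.π ⁻¹' Iic (F.π ω) ∪ (F.π ⁻¹' {F.π ω} ∪ G.π ⁻¹' {G.π ω}) := by
    intro ω' hB'
    rw [Set.mem_preimage, Set.mem_Iic] at hB'
    by_cases hne : ω' = ω
    · exact Or.inl (by rw [Set.mem_preimage, Set.mem_Iic, hne])
    · have hne2 : {n | ω' n ≠ ω n}.Nonempty := Function.ne_iff.mp hne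
      have hkmem : ω' (sInf {n | ω' n ≠ ω n}) ≠ ω (sInf {n | ω' n ≠ ω n}) :=
        Nat.sInf_mem hne2
      have hmin : ∀ j < sInf {n | ω' n ≠ ω n}, ω' j = ω j :=
        fun j hj => not_not.mp (Nat.notMem_of_lt_sInf hj)
      rcases hkmem.lt_or_gt with hlt | hgt
      · exact Or.inl (pi_le F _ ω' ω hmin hlt)
      · refine Or.inr (Or.inr ?_)
        have := pi_le G _ ω ω' (fun j hj => (hmin j hj).symm) hgt
        exact le_antisymm hB' this
  have hABeq : μg (F.π ⁻¹' Iic (F.π ω)) = μg (G.π ⁻¹' Iic (G.π ω)) := by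
    refine le_antisymm ?_ ?_
    · refine le_trans (measure_mono hsub1) ?_
      refine le_trans (measure_union_le _ _) ?_
      rw [hN, add_zero]
    · refine le_trans (measure_mono hsub2) ?_
      refine le_trans (measure_union_le _ _) ?_
      rw [hN, add_zero]
  rw [hΘ ω, Measure.map_apply hπf measurableSet_Iic, hABeq,
    ← Measure.map_apply hπg measurableSet_Iic, hLeb,
    Measure.restrict_apply measurableSet_Iic]
  have hset : Iic (G.π ω) ∩ Icc (0 : ℝ) 1 = Icc 0 (G.π ω) := by
    ext y
    simp only [Set.mem_inter_iff, Set.mem_Iic, Set.mem_Icc]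
    constructor
    · rintro ⟨hy1, hy2, hy3⟩; exact ⟨hy2, hy1⟩
    · rintro ⟨hy1, hy2⟩; exact ⟨hy2, hy1, hy2.trans hc01.2⟩
  rw [hset, Real.volume_Icc, ENNReal.toReal_ofReal (by linarith [hc01.1])]
  ring
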